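/- There exists R > 0 such that for every x ∈ ℝ and every ξ ∈ M(x) one has |x − ξ| ≤ R. -/

import Mathlib

open Filter MeasureTheory

/-- Condition (f): `f` is `C²`, strongly convex (`f'' > 0` everywhere), and
`f' → ∓∞` at `∓∞`. -/
def CondF (f : ℝ → ℝ) : Prop :=
  ContDiff ℝ 2 f ∧ (∀ x, 0 < deriv (deriv f) x) ∧
    Tendsto (deriv f) atBot atBot ∧ Tendsto (deriv f) atTop atTop

/-- The Legendre transform `f*(y) = sup_x (y·x − f(x))`. -/
noncomputable def legendre (f : ℝ → ℝ) (y : ℝ) : ℝ :=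
  sSup (Set.range fun x => y * x - f x)

/-- `U_T(x) = ∫_{x̌}^x u_T`. -/
noncomputable def UT (uT : ℝ → ℝ) (xc x : ℝ) : ℝ := ∫ ξ in xc..x, uT ξ

/-- `U_o^♭(x) = sup_ξ [U_T(ξ) − T f*((ξ−x)/T)]`. -/
noncomputable def Uflat (f : ℝ → ℝ) (T : ℝ) (uT : ℝ → ℝ) (xc x : ℝ) : ℝ :=
  sSup (Set.range fun ξ => UT uT xc ξ - T * legendre f ((ξ - x) / T))

/-- `M(x)`: the set of maximizers in the definition of `U_o^♭(x)`. -/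
def MSet (f : ℝ → ℝ) (T : ℝ) (uT : ℝ → ℝ) (xc x : ℝ) : Set ℝ :=
  {ξ | UT uT xc ξ = Uflat f T uT xc x + T * legendre f ((ξ - x) / T)}

/-- Oleinik condition (O) at `T`. -/
def Oleinik (f : ℝ → ℝ) (T : ℝ) (uT : ℝ → ℝ) : Prop :=
  ∀ x Δ : ℝ, 0 < Δ → deriv f (uT (x + Δ)) - deriv f (uT x) ≤ Δ / T

/-- The Hopf–Lax operator at time `T`: `(S_T U)(x) = inf_ξ [U(ξ) + T f*((x−ξ)/T)]`. -/
noncomputable def HopfLax (f : ℝ → ℝ) (T : ℝ) (U : ℝ → ℝ) (x : ℝ) : ℝ :=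
  sInf (Set.range fun ξ => U ξ + T * legendre f ((x - ξ) / T))

/-- Left continuity of a real function. -/
def LeftCts (u : ℝ → ℝ) : Prop :=
  ∀ x, Tendsto u (nhdsWithin x (Set.Iio x)) (nhds (u x))

/-- `II_T(U_T; J)`: Lipschitz functions with a.e. derivative in `J` evolving into `U_T`
under the Hopf–Lax semigroup. -/
def IIT (f : ℝ → ℝ) (T : ℝ) (uT : ℝ → ℝ) (xc : ℝ) (J : Set ℝ) : Set (ℝ → ℝ) :=
  {U | (∃ K, LipschitzWith K U) ∧ (∀ᵐ x ∂volume, deriv U x ∈ J) ∧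
    ∀ x, HopfLax f T U x = UT uT xc x}

/-- `U_o^♯(x) = sup { U(x) : U ∈ II_T(U_T; J) }`. -/
noncomputable def Usharp (f : ℝ → ℝ) (T : ℝ) (uT : ℝ → ℝ) (xc : ℝ) (J : Set ℝ) (x : ℝ) : ℝ :=
  sSup ((fun U : ℝ → ℝ => U x) '' IIT f T uT xc J)


-- convexity tangent line inequality
lemma tangent_le {f : ℝ → ℝ} (hd : Differentiable ℝ f)
    (hm : StrictMono (deriv f)) (c x : ℝ) :
    f c + deriv f c * (x - c) ≤ f x := by
  rcases lt_trichotomy x c with h | h | h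
  · obtain ⟨t, ht, h2⟩ := exists_hasDerivAt_eq_slope f (deriv f) h
      (hd.continuous.continuousOn) (fun t _ => (hd t).hasDerivAt)
    have h3 : deriv f t ≤ deriv f c := (hm.le_iff_le).2 ht.2.le
    rw [h2] at h3
    have hcx : 0 < c - x := by linarith
    rw [div_le_iff₀ hcx] at h3
    nlinarith
  · simp [h]
  · obtain ⟨t, ht, h2⟩ := exists_hasDerivAt_eq_slope f (deriv f) h
      (hd.continuous.continuousOn) (fun t _ => (hd t).hasDerivAt)
    have h3 : deriv f c ≤ deriv f t := (hm.le_iff_le).2 ht.1.le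
    rw [h2] at h3
    have hcx : 0 < x - c := by linarith
    rw [le_div_iff₀ hcx] at h3
    nlinarith

lemma bddAbove_range (f : ℝ → ℝ) (hd : Differentiable ℝ f)
    (hm : StrictMono (deriv f))
    (hbot : Tendsto (deriv f) atBot atBot) (htop : Tendsto (deriv f) atTop atTop)
    (y : ℝ) : BddAbove (Set.range fun x => y * x - f x) := by
  obtain ⟨a, ha⟩ := (hbot.eventually_lt_atBot y).exists
  obtain ⟨b, hb⟩ := (htop.eventually_gt_atTop y).exists
  have hab : a ≤ b := (hm.lt_iff_lt.mp (ha.trans hb)).le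
  set g : ℝ → ℝ := fun x => y * x - f x with hg
  have hgc : Continuous g := (continuous_const.mul continuous_id).sub hd.continuous
  obtain ⟨t, ht, hmax⟩ := (isCompact_Icc (a := a) (b := b)).exists_isMaxOn
    (Set.nonempty_Icc.2 hab) hgc.continuousOn
  refine ⟨g t, ?_⟩
  rintro _ ⟨x, rfl⟩
  rcases le_or_gt x a with hx | hx
  · have h1 : g x ≤ g a := by
      have := tangent_le hd hm a x
      simp only [hg]
      nlinarith [mul_nonpos_of_nonneg_of_nonpos (sub_pos.2 ha).le (sub_nonpos.2 hx)]
    exact h1.trans (hmax (Set.left_mem_Icc.2 hab))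
  rcases le_or_gt x b with hx2 | hx2
  · exact hmax ⟨hx.le, hx2⟩
  · have h1 : g x ≤ g b := by
      have := tangent_le hd hm b x
      simp only [hg]
      nlinarith [mul_nonpos_of_nonpos_of_nonneg (sub_nonpos.2 hb.le) (sub_nonneg.2 hx2.le)]
    exact h1.trans (hmax (Set.right_mem_Icc.2 hab))

lemma legendre_ge (f : ℝ → ℝ) (hd : Differentiable ℝ f)
    (hm : StrictMono (deriv f))
    (hbot : Tendsto (deriv f) atBot atBot) (htop : Tendsto (deriv f) atTop atTop)
    (y c : ℝ) : y * c - f c ≤ legendre f y :=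
  le_csSup (bddAbove_range f hd hm hbot htop y) ⟨c, rfl⟩

lemma legendre_superlinear (f : ℝ → ℝ) (hd : Differentiable ℝ f)
    (hm : StrictMono (deriv f))
    (hbot : Tendsto (deriv f) atBot atBot) (htop : Tendsto (deriv f) atTop atTop)
    (A y : ℝ) (hA : 0 ≤ A) :
    A * |y| - max (f A) (f (-A)) ≤ legendre f y := by
  rcases le_or_gt 0 y with hy | hy
  · have := legendre_ge f hd hm hbot htop y A
    rw [abs_of_nonneg hy]
    nlinarith [le_max_left (f A) (f (-A))]
  · have := legendre_ge f hd hm hbot htop y (-A)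
    rw [abs_of_neg hy]
    nlinarith [le_max_right (f A) (f (-A))]

theorem stmt_6 (f : ℝ → ℝ) (hf : CondF f) (T : ℝ) (hT : 0 < T)
    (uT : ℝ → ℝ) (huT : Measurable uT) (C : ℝ) (hC : ∀ x, |uT x| ≤ C) (xc : ℝ) :
    ∃ R : ℝ, 0 < R ∧ ∀ x ξ : ℝ, ξ ∈ MSet f T uT xc x → |x - ξ| ≤ R := by
  obtain ⟨hf1, hf2, hbot, htop⟩ := hf
  have hd : Differentiable ℝ f := hf1.differentiable (by norm_num)
  have hm : StrictMono (deriv f) := strictMono_of_deriv_pos hf2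
  have hC0 : 0 ≤ C := (abs_nonneg _).trans (hC 0)
  set A : ℝ := C + 1 with hA
  set K : ℝ := max (f A) (f (-A)) with hK
  set L0 : ℝ := legendre f 0 with hL0
  -- interval integrability of uT
  have hint : ∀ a b : ℝ, IntervalIntegrable uT volume a b := fun a b =>
    (intervalIntegrable_const (c := C)).mono_fun' huT.aestronglyMeasurable.restrict
      (Filter.Eventually.of_forall fun x => by simpa [Real.norm_eq_abs] using hC x)
  -- Lipschitz bound on UT
  have hUT : ∀ a b : ℝ, |UT uT xc b - UT uT xc a| ≤ C * |b - a| := by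
    intro a b
    have h1 : UT uT xc b - UT uT xc a = ∫ x in a..b, uT x :=
      intervalIntegral.integral_interval_sub_left (hint xc b) (hint xc a)
    rw [h1, ← Real.norm_eq_abs]
    exact intervalIntegral.norm_integral_le_of_norm_le_const fun x _ => by
      rw [Real.norm_eq_abs]; exact hC x
  have hUT0 : ∀ b : ℝ, |UT uT xc b| ≤ C * |b - xc| := by
    intro b
    have := hUT xc b
    simpa [UT, intervalIntegral.integral_same] using this
  -- superlinear lower bound (scaled)
  have hsup : ∀ z : ℝ, A * |z| - T * K ≤ T * legendre f (z / T) := by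
    intro z
    have h1 := legendre_superlinear f hd hm hbot htop A (z / T) (by positivity)
    have h2 : |z / T| = |z| / T := by
      rw [abs_div, abs_of_pos hT]
    rw [h2] at h1
    have h3 := mul_le_mul_of_nonneg_left h1 hT.le
    calc A * |z| - T * K = T * (A * (|z| / T) - K) := by
          field_simp
      _ ≤ T * legendre f (z / T) := h3
  -- the range defining Uflat is bounded above
  have hbdd : ∀ x : ℝ, BddAbove
      (Set.range fun ξ => UT uT xc ξ - T * legendre f ((ξ - x) / T)) := by
    intro x
    refine ⟨C * |x - xc| + T * K, ?_⟩
    rintro _ ⟨ξ, rfl⟩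
    have h1 := hUT0 ξ
    have h2 := hsup (ξ - x)
    have h3 : |ξ - xc| ≤ |ξ - x| + |x - xc| := abs_sub_le ξ x xc
    have h4 := abs_le.mp h1
    nlinarith [abs_nonneg (ξ - x)]
  refine ⟨max (T * (L0 + K)) 1, lt_max_of_lt_right one_pos, ?_⟩
  intro x ξ hξ
  have hmem : ξ ∈ MSet f T uT xc x := hξ
  rw [MSet, Set.mem_setOf_eq] at hmem
  have hfl : UT uT xc x - T * L0 ≤ Uflat f T uT xc x := by
    have h := le_csSup (hbdd x) ⟨x, rfl⟩
    simpa [hL0, Uflat] using h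
  have h2 := hsup (ξ - x)
  have h5 := abs_le.mp (hUT x ξ)
  have h6 : |ξ - x| ≤ T * (L0 + K) := by
    nlinarith [hfl, h2, h5.2, hmem]
  rw [abs_sub_comm]
  exact h6.trans (le_max_left _ _)
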